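/- Let M be a metric space, X ⊆ M closed, and L a cell complex cellulating M ∖ X with cells scattered towards X. Suppose S ⊆ L is a closed subset of L such that S ∩ C is compact for every subcomplex C of L with compact closure in M. Then S ∩ K is compact for every compact K ⊆ M. -/

import Mathlib

open Filter

/-- Let `X ⊆ M` be closed and `M ∖ X` be cellulated by a cell complex with
(compact) closed cells `K i` scattered towards `X`.  Suppose `S` is a closed subset of
the subspace `M ∖ X` such that `S ∩ C` is compact for every subcomplex `C` (union of
closed cells) having compact closure in `M`.  Then `S ∩ Q` is compact for every compact
`Q ⊆ M`. -/
theorem stmt15 {M : Type} [MetricSpace M] (X : Set M) (hX : IsClosed X)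
    {ι : Type} (K : ι → Set M)
    (hne : ∀ i, (K i).Nonempty)
    (hcpt : ∀ i, IsCompact (K i))
    (hcover : (⋃ i, K i) = Xᶜ)
    (hscat : ∀ (n : ℕ → ι) (y y' : ℕ → M) (x : M), x ∈ X →
      (∀ k, y k ∈ K (n k)) → (∀ k, y' k ∈ K (n k)) →
      Tendsto y atTop (nhds x) → Tendsto y' atTop (nhds x))
    (S : Set M) (hSX : S ⊆ Xᶜ)
    (hScl : ∃ T : Set M, IsClosed T ∧ S = T ∩ Xᶜ)
    (hSκ : ∀ J : Set ι, IsCompact (closure (⋃ i ∈ J, K i)) →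
      IsCompact (S ∩ ⋃ i ∈ J, K i)) :
    ∀ Q : Set M, IsCompact Q → IsCompact (S ∩ Q) := by
  intro Q hQ
  by_contra hnc
  obtain ⟨T, hT, hST⟩ := hScl
  -- S ∩ Q is not closed
  have hnotcl : ¬ IsClosed (S ∩ Q) := fun h =>
    hnc (hQ.of_isClosed_subset h Set.inter_subset_right)
  -- Get a point in closure \ (S ∩ Q)
  have hsub : ¬ closure (S ∩ Q) ⊆ S ∩ Q := by
    intro h
    exact hnotcl (closure_subset_iff_isClosed.mp h)
  obtain ⟨x, hxcl, hxnot⟩ := Set.not_subset.mp hsub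
  -- x ∈ X
  have hxTQ : x ∈ T ∩ Q := by
    have : closure (S ∩ Q) ⊆ T ∩ Q := by
      apply closure_minimal _ (hT.inter hQ.isClosed)
      intro z hz
      exact ⟨(hST ▸ hz.1).1, hz.2⟩
    exact this hxcl
  have hxX : x ∈ X := by
    by_contra hxX
    exact hxnot ⟨hST ▸ ⟨hxTQ.1, hxX⟩, hxTQ.2⟩
  -- sequence in S ∩ Q converging to x
  obtain ⟨u, hu, hux⟩ := mem_closure_iff_seq_limit.mp hxcl
  -- choose cells
  have hchoice : ∀ k, ∃ i, u k ∈ K i := by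
    intro k
    have : u k ∈ ⋃ i, K i := hcover ▸ hSX (hu k).1
    simpa using this
  choose n hn using hchoice
  set J : Set ι := Set.range n with hJ
  set C : Set M := ⋃ i ∈ J, K i with hC
  -- closure C is compact via sequential compactness
  have hclC : IsCompact (closure C) := by
    apply IsSeqCompact.isCompact
    intro z hz
    -- approximate z by points of C
    have happrox : ∀ m : ℕ, ∃ y ∈ C, dist (z m) y < 1 / (m + 1) := by
      intro m
      have h1 : (0:ℝ) < 1 / (m + 1) := by positivity
      exact Metric.mem_closure_iff.mp (hz m) _ h1
    choose y hyC hyd using happrox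
    have hky : ∀ m, ∃ k, y m ∈ K (n k) := by
      intro m
      obtain ⟨i, hi, hmem⟩ := Set.mem_iUnion₂.mp (hyC m)
      obtain ⟨k, rfl⟩ := hi
      exact ⟨k, hmem⟩
    choose k hk using hky
    have hdz : Tendsto (fun m => dist (z m) (y m)) atTop (nhds 0) := by
      apply squeeze_zero (fun m => dist_nonneg) (fun m => le_of_lt (hyd m))
      exact tendsto_one_div_add_atTop_nhds_zero_nat
    by_cases hfin : ∃ j : ℕ, {m | k m = j}.Infinite
    · -- infinitely many y's in one compact cell
      obtain ⟨j, hj⟩ := hfin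
      have hfreq : ∃ᶠ m in atTop, k m = j := Nat.frequently_atTop_iff_infinite.mpr hj
      obtain ⟨φ, hφ, hφj⟩ := extraction_of_frequently_atTop hfreq
      have hmem : ∀ m, y (φ m) ∈ K (n j) := fun m => hφj m ▸ hk (φ m)
      obtain ⟨a, haK, ψ, hψ, hya⟩ := (hcpt (n j)).isSeqCompact hmem
      refine ⟨a, ?_, φ ∘ ψ, hφ.comp hψ, ?_⟩
      · exact subset_closure (Set.mem_iUnion₂.mpr ⟨n j, ⟨j, rfl⟩, haK⟩)
      · refine Tendsto.congr_dist hya ?_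
        have : Tendsto (fun m => dist (z (φ (ψ m))) (y (φ (ψ m)))) atTop (nhds 0) :=
          hdz.comp ((hφ.comp hψ).tendsto_atTop)
        refine this.congr (fun m => ?_)
        simp [dist_comm, Function.comp]
    · -- k m → ∞
      push_neg at hfin
      have hktop : Tendsto k atTop atTop := by
        rw [tendsto_atTop]
        intro b
        have hfin2 : {m | ¬ b ≤ k m}.Finite := by
          apply Set.Finite.subset (Set.Finite.biUnion (Set.finite_Iio b)
            (fun j _ => hfin j))
          intro m hm
          exact Set.mem_biUnion (by simpa using Set.mem_setOf.mp hm) rfl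
        have := hfin2.compl_mem_cofinite
        rw [Nat.cofinite_eq_atTop] at this
        filter_upwards [this] with m hm
        simpa using hm
      have huk : Tendsto (fun m => u (k m)) atTop (nhds x) := hux.comp hktop
      have hyx : Tendsto y atTop (nhds x) :=
        hscat (fun m => n (k m)) (fun m => u (k m)) y x hxX
          (fun m => hn (k m)) hk huk
      have hzx : Tendsto z atTop (nhds x) := by
        refine Tendsto.congr_dist hyx ?_
        refine hdz.congr (fun m => ?_)
        simp [dist_comm]
      refine ⟨x, ?_, id, strictMono_id, hzx⟩
      exact isClosed_closure.mem_of_tendsto hzx (Eventually.of_forall hz)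
  -- conclude
  have hSC : IsCompact (S ∩ C) := hSκ J hclC
  have hxSC : x ∈ S ∩ C :=
    hSC.isClosed.mem_of_tendsto hux (Eventually.of_forall
      (fun m => ⟨(hu m).1, Set.mem_iUnion₂.mpr ⟨n m, ⟨m, rfl⟩, hn m⟩⟩))
  exact hSX hxSC.1 hxX
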